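/- arXiv:0704.0615 — 2 statements merged into one kernel-verified Lean document; each statement's English description precedes it below -/
import Mathlib

section
/- Performing a single TBR (tree bisection and reconnection) rearrangement on a fully resolved phylogenetic tree increases the parsimony length of any unordered reversible character by at most one: if T' differs from T by one TBR move, then ℓ(X,T') ≤ ℓ(X,T) + 1. -/
/-- A fully resolved (binary) unrooted phylogenetic tree on vertex set `V` with
leaf set `L`: a tree in which every leaf has degree 1 and every internal
(non-leaf) vertex has degree 3. -/
structure PhyloTree (V : Type*) [Fintype V] (L : Set V) where
  graph : SimpleGraph V
  isTree : graph.IsTree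
  leaf_deg : ∀ v ∈ L, (graph.neighborSet v).ncard = 1
  internal_deg : ∀ v ∉ L, (graph.neighborSet v).ncard = 3

/-- The number of edges of `G` whose two endpoints receive different states under `f`. -/
noncomputable def changedEdges {V S : Type*} (G : SimpleGraph V) (f : V → S) : ℕ :=
  {e | e ∈ G.edgeSet ∧ ¬ (Sym2.map f e).IsDiag}.ncard

/-- The (Fitch) parsimony length of character `X` on the tree `T`: the minimum over
all extensions of `X` to the internal vertices of the number of edges whose
endpoints receive different states. -/
noncomputable def parsLen {V : Type*} [Fintype V] {L : Set V} {S : Type*}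
    (T : PhyloTree V L) (X : L → S) : ℕ :=
  sInf { n | ∃ f : V → S, (∀ v : L, f ↑v = X v) ∧ changedEdges T.graph f = n }

/-- The number of states of a character. -/
noncomputable def numStates {L S : Type*} (X : L → S) : ℕ := (Set.range X).ncard

/-- `T'` is obtained from `T` by a single SPR (subtree prune and regraft)
rearrangement: the edge `{u,v}` is cut detaching the subtree containing `v`
(the degree-2 vertex left behind is suppressed, i.e. `u`'s other two neighbours
`a` and `b` are joined directly), and the subtree is regrafted by attaching `u`
to a subdivision point of the edge `{x,y}` (the vertex `u` serves as the
subdivision point). The requirement that the result again be a phylogenetic tree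
forces `{x,y}` to lie in the component not containing `v`. -/
def SPRMove {V : Type*} [Fintype V] {L : Set V} (T T' : PhyloTree V L) : Prop :=
  ∃ u v a b x y : V, u ∉ L ∧
    T.graph.Adj u v ∧ T.graph.Adj u a ∧ T.graph.Adj u b ∧
    a ≠ b ∧ a ≠ v ∧ b ≠ v ∧
    T.graph.Adj x y ∧ u ≠ x ∧ u ≠ y ∧
    T'.graph = SimpleGraph.fromEdgeSet
      ((T.graph.edgeSet \ {s(u,a), s(u,b), s(x,y)}) ∪ {s(a,b), s(u,x), s(u,y)})

/-- `T'` is obtained from `T` by a single TBR (tree bisection and reconnection)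
rearrangement: an edge `{u,v}` is removed, the two resulting degree-2 vertices
are suppressed, and the two components are reconnected by a new edge joining a
subdivision point of an edge of one component to a subdivision point of an edge
of the other (the vertices `u` and `v` serve as subdivision points). When one
of the two reattachment points is unchanged this degenerates to an SPR move. -/
def TBRMove {V : Type*} [Fintype V] {L : Set V} (T T' : PhyloTree V L) : Prop :=
  SPRMove T T' ∨
  ∃ u v a b c d x y p q : V, u ∉ L ∧ v ∉ L ∧
    T.graph.Adj u v ∧
    T.graph.Adj u a ∧ T.graph.Adj u b ∧ a ≠ b ∧ a ≠ v ∧ b ≠ v ∧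
    T.graph.Adj v c ∧ T.graph.Adj v d ∧ c ≠ d ∧ c ≠ u ∧ d ≠ u ∧
    T.graph.Adj x y ∧ u ≠ x ∧ u ≠ y ∧ v ≠ x ∧ v ≠ y ∧
    T.graph.Adj p q ∧ u ≠ p ∧ u ≠ q ∧ v ≠ p ∧ v ≠ q ∧
    T'.graph = SimpleGraph.fromEdgeSet
      ((T.graph.edgeSet \ {s(u,a), s(u,b), s(v,c), s(v,d), s(x,y), s(p,q)}) ∪
        {s(a,b), s(c,d), s(u,x), s(u,y), s(v,p), s(v,q)})

/-- Two phylogenetic trees are isomorphic (equal as phylogenetic trees) if there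
is a graph isomorphism between them fixing every leaf. -/
def PhyloIso {V : Type*} [Fintype V] {L : Set V} (T T' : PhyloTree V L) : Prop :=
  ∃ φ : T.graph ≃g T'.graph, ∀ v ∈ L, φ v = v

/-- The SPR distance: the minimum number of SPR rearrangements transforming `T`
into (a tree isomorphic to) `T'`. -/
noncomputable def SPRDist {V : Type*} [Fintype V] {L : Set V} (T T' : PhyloTree V L) : ℕ :=
  sInf { n | ∃ g : ℕ → PhyloTree V L, g 0 = T ∧ PhyloIso (g n) T' ∧
    ∀ i < n, SPRMove (g i) (g (i + 1)) }

/-- The TBR distance: the minimum number of TBR rearrangements transforming `T`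
into (a tree isomorphic to) `T'`. -/
noncomputable def TBRDist {V : Type*} [Fintype V] {L : Set V} (T T' : PhyloTree V L) : ℕ :=
  sInf { n | ∃ g : ℕ → PhyloTree V L, g 0 = T ∧ PhyloIso (g n) T' ∧
    ∀ i < n, TBRMove (g i) (g (i + 1)) }

/-- A character with `r` states is compatible with (convex on) a tree iff its
parsimony length on the tree is `r - 1`. -/
def Compatible {V : Type*} [Fintype V] {L : Set V} {S : Type*}
    (X : L → S) (r : ℕ) (T : PhyloTree V L) : Prop :=
  parsLen T X = r - 1

/-- The SPR distance from a tree `T` to a character `X` (with `r` states): the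
minimum SPR distance from `T` to a fully resolved tree compatible with `X`. -/
noncomputable def charSPRDist {V : Type*} [Fintype V] {L : Set V} {S : Type*}
    (T : PhyloTree V L) (X : L → S) (r : ℕ) : ℕ :=
  sInf { d | ∃ T' : PhyloTree V L, Compatible X r T' ∧ d = SPRDist T T' }

/-- The TBR distance from a tree `T` to a character `X` (with `r` states). -/
noncomputable def charTBRDist {V : Type*} [Fintype V] {L : Set V} {S : Type*}
    (T : PhyloTree V L) (X : L → S) (r : ℕ) : ℕ :=
  sInf { d | ∃ T' : PhyloTree V L, Compatible X r T' ∧ d = TBRDist T T' }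

/-- The total incongruence score of two characters with `r₁` and `r₂` states:
the maximum parsimony score of the pair minus the minimum number of changes
required for each character. -/
noncomputable def incong (V : Type*) [Fintype V] (L : Set V) {S₁ S₂ : Type*}
    (X₁ : L → S₁) (X₂ : L → S₂) (r₁ r₂ : ℕ) : ℕ :=
  sInf { n | ∃ T : PhyloTree V L, n = parsLen T X₁ + parsLen T X₂ } - (r₁ - 1) - (r₂ - 1)


section Helpers
open SimpleGraph Set

variable {V : Type*} [Fintype V] {S : Type*}

lemma bad_pair (f : V → S) (w z : V) : (¬ (Sym2.map f s(w,z)).IsDiag) ↔ f w ≠ f z := by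
  simp [Sym2.isDiag_iff_proj_eq]

lemma diff_inter_ncard (B R : Set (Sym2 V)) : (B \ R).ncard + (B ∩ R).ncard = B.ncard := by
  rw [← Set.ncard_union_eq (disjoint_of_subset_right inter_subset_right disjoint_sdiff_left)
      (toFinite _) (toFinite _), Set.diff_union_inter]

lemma main_count (Bnew Bold R K : Set (Sym2 V))
    (hA : Bnew ⊆ (Bold \ R) ∪ (Bnew ∩ K))
    (hB : (Bnew ∩ K).ncard ≤ (Bold ∩ R).ncard + 1) :
    Bnew.ncard ≤ Bold.ncard + 1 := by
  have h1 : Bnew.ncard ≤ ((Bold \ R) ∪ (Bnew ∩ K)).ncard :=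
    Set.ncard_le_ncard hA (toFinite _)
  have h2 := Set.ncard_union_le (Bold \ R) (Bnew ∩ K)
  have h3 := diff_inter_ncard Bold R
  omega

lemma two_le (X Y W : Set (Sym2 V)) (hX : X ⊆ W) (hY : Y ⊆ W) (hd : Disjoint X Y) :
    X.ncard + Y.ncard ≤ W.ncard := by
  rw [← Set.ncard_union_eq hd (toFinite _) (toFinite _)]
  exact Set.ncard_le_ncard (union_subset hX hY) (toFinite _)

lemma four_le (X1 X2 X3 X4 W : Set (Sym2 V)) (h1 : X1 ⊆ W) (h2 : X2 ⊆ W) (h3 : X3 ⊆ W)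
    (h4 : X4 ⊆ W) (d12 : Disjoint X1 X2) (d13 : Disjoint X1 X3) (d14 : Disjoint X1 X4)
    (d23 : Disjoint X2 X3) (d24 : Disjoint X2 X4) (d34 : Disjoint X3 X4) :
    X1.ncard + X2.ncard + X3.ncard + X4.ncard ≤ W.ncard := by
  have e12 : (X1 ∪ X2).ncard = X1.ncard + X2.ncard :=
    Set.ncard_union_eq d12 (toFinite _) (toFinite _)
  have e34 : (X3 ∪ X4).ncard = X3.ncard + X4.ncard :=
    Set.ncard_union_eq d34 (toFinite _) (toFinite _)
  have d : Disjoint (X1 ∪ X2) (X3 ∪ X4) := by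
    rw [Set.disjoint_union_left]
    exact ⟨Set.disjoint_union_right.mpr ⟨d13, d14⟩, Set.disjoint_union_right.mpr ⟨d23, d24⟩⟩
  have := two_le (X1 ∪ X2) (X3 ∪ X4) W (union_subset h1 h2) (union_subset h3 h4) d
  omega

lemma inter_singleton_le (B T : Set (Sym2 V)) (e : Sym2 V) (h : e ∈ B → T.Nonempty) :
    (B ∩ {e}).ncard ≤ T.ncard := by
  by_cases he : e ∈ B
  · have h1 : (B ∩ {e}).ncard ≤ 1 := by
      calc (B ∩ {e}).ncard ≤ ({e} : Set (Sym2 V)).ncard :=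
            Set.ncard_le_ncard inter_subset_right (toFinite _)
        _ = 1 := Set.ncard_singleton e
    have h2 : 0 < T.ncard := (Set.ncard_pos (toFinite _)).mpr (h he)
    omega
  · have : B ∩ {e} = ∅ := by
      ext z; simp only [Set.mem_inter_iff, Set.mem_singleton_iff, Set.mem_empty_iff_false,
        iff_false, not_and]
      rintro hz rfl; exact he hz
    simp [this]

lemma no_triangle (G : SimpleGraph V) (hT : G.IsTree) {u v x : V} (h1 : G.Adj u v)
    (h2 : G.Adj v x) (h3 : G.Adj u x) : False := by
  have hpath : (Walk.cons h3 (Walk.cons h2.symm Walk.nil)).IsPath := by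
    simp [Walk.cons_isPath_iff, h3.ne, h1.ne, h2.ne']
  have := isAcyclic_iff_path_unique.mp hT.IsAcyclic (Path.singleton h1)
    ⟨Walk.cons h3 (Walk.cons h2.symm Walk.nil), hpath⟩
  have hlen := congrArg (fun p : G.Path u v => p.1.length) this
  simp [Path.singleton] at hlen

lemma deg3_neighbors (G : SimpleGraph V) {u v a b : V}
    (h3 : (G.neighborSet u).ncard = 3) (hv : G.Adj u v) (ha : G.Adj u a) (hb : G.Adj u b)
    (hab : a ≠ b) (hav : a ≠ v) (hbv : b ≠ v) : G.neighborSet u = {v, a, b} := by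
  have hsub : ({v, a, b} : Set V) ⊆ G.neighborSet u := by
    rintro w (rfl | rfl | rfl) <;> assumption
  have hcard : ({v, a, b} : Set V).ncard = 3 := by
    rw [Set.ncard_insert_of_notMem (by simp only [Set.mem_insert_iff, Set.mem_singleton_iff]; push_neg; exact ⟨fun h => hav h.symm, fun h => hbv h.symm⟩),
      Set.ncard_insert_of_notMem (by simp [hab]), Set.ncard_singleton]
  exact (Set.eq_of_subset_of_ncard_le hsub (by omega) (toFinite _)).symm

end Helpers

section Core
open SimpleGraph Set
variable {V : Type*} [Fintype V] {L : Set V} {S : Type*}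

set_option maxHeartbeats 1000000 in
lemma spr_core (T T' : PhyloTree V L) (f : V → S)
    (u v a b x y : V) (huL : u ∉ L)
    (huv : T.graph.Adj u v) (hua : T.graph.Adj u a) (hub : T.graph.Adj u b)
    (hab : a ≠ b) (hav : a ≠ v) (hbv : b ≠ v)
    (hxy : T.graph.Adj x y) (hux : u ≠ x) (huy : u ≠ y)
    (hEq : T'.graph = SimpleGraph.fromEdgeSet
      ((T.graph.edgeSet \ {s(u,a), s(u,b), s(x,y)}) ∪ {s(a,b), s(u,x), s(u,y)})) :
    ∃ f' : V → S, (∀ w : V, w ≠ u → f' w = f w) ∧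
      changedEdges T'.graph f' ≤ changedEdges T.graph f + 1 := by
  classical
  set f' : V → S := Function.update f u (f x) with hf'def
  refine ⟨f', fun w hw => Function.update_of_ne hw _ _, ?_⟩
  have hfu : f' u = f x := Function.update_self u (f x) f
  have hfne : ∀ w : V, w ≠ u → f' w = f w := fun w hw => Function.update_of_ne hw _ _
  set R : Set (Sym2 V) := {s(u,a), s(u,b), s(x,y)} with hRdef
  set K : Set (Sym2 V) := {s(u,v), s(a,b), s(u,x), s(u,y)} with hKdef
  set Bnew : Set (Sym2 V) := {e | e ∈ T'.graph.edgeSet ∧ ¬ (Sym2.map f' e).IsDiag} with hBnew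
  set Bold : Set (Sym2 V) := {e | e ∈ T.graph.edgeSet ∧ ¬ (Sym2.map f e).IsDiag} with hBold
  have hnb : T.graph.neighborSet u = {v, a, b} :=
    deg3_neighbors T.graph (T.internal_deg u huL) huv hua hub hab hav hbv
  -- any edge of T not in R and not in K avoids u
  have hnu : ∀ c c' : V, T.graph.Adj c c' → s(c,c') ∉ R → s(c,c') ∉ K → c ≠ u := by
    rintro c c' hadj hR hK h
    rw [h] at hadj hR hK
    have hc' : c' ∈ T.graph.neighborSet u := hadj
    rw [hnb] at hc'
    rcases hc' with rfl | rfl | rfl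
    · exact hK (by simp [hKdef])
    · exact hR (by simp [hRdef])
    · exact hR (by simp [hRdef])
  have memA : ∀ w z : V, s(w,z) ∈ Bnew → s(w,z) ∉ K → s(w,z) ∈ Bold \ R := by
    intro w z hB hK
    obtain ⟨hE', hbad⟩ := hB
    rw [hEq, SimpleGraph.edgeSet_fromEdgeSet] at hE'
    have hE2 := hE'.1
    have hAR : s(w,z) ∈ T.graph.edgeSet \ R := by
      rcases hE2 with h | h
      · exact h
      · exfalso; apply hK
        rcases h with h | h | h <;> simp [hKdef, h]
    have hadj : T.graph.Adj w z := hAR.1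
    have hwzswap : s(z,w) = s(w,z) := Sym2.eq_swap
    have hwu : w ≠ u := hnu w z hadj hAR.2 hK
    have hzu : z ≠ u := hnu z w hadj.symm (hwzswap ▸ hAR.2) (hwzswap ▸ hK)
    have hb2 : f w ≠ f z := by
      have := (bad_pair f' w z).mp hbad
      rwa [hfne w hwu, hfne z hzu] at this
    exact ⟨⟨hadj, (bad_pair f w z).mpr hb2⟩, hAR.2⟩
  have hA : Bnew ⊆ (Bold \ R) ∪ (Bnew ∩ K) := by
    intro e
    induction e using Sym2.ind with
    | _ w z =>
      intro he
      by_cases hK : s(w,z) ∈ K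
      · exact Or.inr ⟨he, hK⟩
      · exact Or.inl (memA w z he hK)
  -- Claim B
  have hsub2 : Bnew ∩ K ⊆ insert s(u,v) ((Bnew ∩ K ∩ {s(a,b)}) ∪ (Bnew ∩ K ∩ {s(u,y)})) := by
    rintro e ⟨heB, heK⟩
    simp only [hKdef, Set.mem_insert_iff, Set.mem_singleton_iff] at heK
    rcases heK with rfl | rfl | rfl | rfl
    · exact Set.mem_insert _ _
    · exact Set.mem_insert_of_mem _ (Or.inl ⟨⟨heB, by simp [hKdef]⟩, rfl⟩)
    · exfalso
      have := (bad_pair f' u x).mp heB.2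
      rw [hfu, hfne x (Ne.symm hux)] at this
      exact this rfl
    · exact Set.mem_insert_of_mem _ (Or.inr ⟨⟨heB, by simp [hKdef]⟩, rfl⟩)
  have p1 : (Bnew ∩ K ∩ {s(a,b)}).ncard ≤ (Bold ∩ R ∩ {s(u,a), s(u,b)}).ncard := by
    apply inter_singleton_le
    intro hmem
    have hba : f a ≠ f b := by
      have := (bad_pair f' a b).mp hmem.1.2
      rwa [hfne a hua.ne', hfne b hub.ne'] at this
    by_cases hfa : f u = f a
    · exact ⟨s(u,b), ⟨⟨hub, (bad_pair f u b).mpr (hfa ▸ hba)⟩, by simp [hRdef]⟩, by simp⟩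
    · exact ⟨s(u,a), ⟨⟨hua, (bad_pair f u a).mpr hfa⟩, by simp [hRdef]⟩, by simp⟩
  have p2 : (Bnew ∩ K ∩ {s(u,y)}).ncard ≤ (Bold ∩ R ∩ {s(x,y)}).ncard := by
    apply inter_singleton_le
    intro hmem
    have hxyne : f x ≠ f y := by
      have := (bad_pair f' u y).mp hmem.1.2
      rwa [hfu, hfne y (Ne.symm huy)] at this
    exact ⟨s(x,y), ⟨⟨hxy, (bad_pair f x y).mpr hxyne⟩, by simp [hRdef]⟩, rfl⟩
  have hdisj : Disjoint (Bold ∩ R ∩ {s(u,a), s(u,b)}) (Bold ∩ R ∩ {s(x,y)}) := by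
    rw [Set.disjoint_left]
    rintro e ⟨-, he1⟩ ⟨-, he2⟩
    rw [Set.mem_singleton_iff] at he2
    subst he2
    simp only [Set.mem_insert_iff, Set.mem_singleton_iff, Sym2.eq_iff] at he1
    rcases he1 with (⟨h, -⟩ | ⟨-, h⟩) | (⟨h, -⟩ | ⟨-, h⟩)
    · exact hux h.symm
    · exact huy h.symm
    · exact hux h.symm
    · exact huy h.symm
  have htwo := two_le (Bold ∩ R ∩ {s(u,a), s(u,b)}) (Bold ∩ R ∩ {s(x,y)}) (Bold ∩ R)
    Set.inter_subset_left Set.inter_subset_left hdisj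
  have hB : (Bnew ∩ K).ncard ≤ (Bold ∩ R).ncard + 1 := by
    have c1 : (Bnew ∩ K).ncard ≤
        (insert s(u,v) ((Bnew ∩ K ∩ {s(a,b)}) ∪ (Bnew ∩ K ∩ {s(u,y)}))).ncard :=
      Set.ncard_le_ncard hsub2 (Set.toFinite _)
    have c2 := Set.ncard_insert_le s(u,v) ((Bnew ∩ K ∩ {s(a,b)}) ∪ (Bnew ∩ K ∩ {s(u,y)}))
    have c3 := Set.ncard_union_le (Bnew ∩ K ∩ {s(a,b)}) (Bnew ∩ K ∩ {s(u,y)})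
    omega
  exact main_count Bnew Bold R K hA hB

end Core

section Core2
open SimpleGraph Set

variable {V : Type*} [Fintype V] {L : Set V} {S : Type*}

set_option maxHeartbeats 2000000 in
lemma tbr_core (T T' : PhyloTree V L) (f : V → S)
    (u v a b c d x y p q : V) (huL : u ∉ L) (hvL : v ∉ L)
    (huv : T.graph.Adj u v)
    (hua : T.graph.Adj u a) (hub : T.graph.Adj u b) (hab : a ≠ b) (hav : a ≠ v) (hbv : b ≠ v)
    (hvc : T.graph.Adj v c) (hvd : T.graph.Adj v d) (hcd : c ≠ d) (hcu : c ≠ u) (hdu : d ≠ u)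
    (hxy : T.graph.Adj x y) (hux : u ≠ x) (huy : u ≠ y) (hvx : v ≠ x) (hvy : v ≠ y)
    (hpq : T.graph.Adj p q) (hup : u ≠ p) (huq : u ≠ q) (hvp : v ≠ p) (hvq : v ≠ q)
    (hEq : T'.graph = SimpleGraph.fromEdgeSet
      ((T.graph.edgeSet \ {s(u,a), s(u,b), s(v,c), s(v,d), s(x,y), s(p,q)}) ∪
        {s(a,b), s(c,d), s(u,x), s(u,y), s(v,p), s(v,q)})) :
    ∃ f' : V → S, (∀ w : V, w ≠ u → w ≠ v → f' w = f w) ∧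
      changedEdges T'.graph f' ≤ changedEdges T.graph f + 1 := by
  classical
  set f' : V → S := Function.update (Function.update f u (f x)) v (f p) with hf'def
  have hfv : f' v = f p := by rw [hf'def]; exact Function.update_self _ _ _
  have hfu : f' u = f x := by
    rw [hf'def, Function.update_of_ne huv.ne, Function.update_self]
  have hfne : ∀ w : V, w ≠ u → w ≠ v → f' w = f w := by
    intro w hwu hwv
    rw [hf'def, Function.update_of_ne hwv, Function.update_of_ne hwu]
  refine ⟨f', hfne, ?_⟩
  set R : Set (Sym2 V) := {s(u,a), s(u,b), s(v,c), s(v,d), s(x,y), s(p,q)} with hRdef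
  set K : Set (Sym2 V) := {s(u,v), s(a,b), s(c,d), s(u,x), s(u,y), s(v,p), s(v,q)} with hKdef
  set Bnew : Set (Sym2 V) := {e | e ∈ T'.graph.edgeSet ∧ ¬ (Sym2.map f' e).IsDiag} with hBnew
  set Bold : Set (Sym2 V) := {e | e ∈ T.graph.edgeSet ∧ ¬ (Sym2.map f e).IsDiag} with hBold
  have hnbu : T.graph.neighborSet u = {v, a, b} :=
    deg3_neighbors T.graph (T.internal_deg u huL) huv hua hub hab hav hbv
  have hnbv : T.graph.neighborSet v = {u, c, d} :=
    deg3_neighbors T.graph (T.internal_deg v hvL) huv.symm hvc hvd hcd hcu hdu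
  -- degenerate case: the two reattachment edges coincide; contradiction with T' a tree
  by_cases hdeg : s(x,y) = s(p,q)
  · exfalso
    have hTuv : T'.graph.Adj u v := by
      rw [hEq, SimpleGraph.fromEdgeSet_adj]
      refine ⟨Or.inl ⟨huv, ?_⟩, huv.ne⟩
      intro hmem
      simp only [hRdef, Set.mem_insert_iff, Set.mem_singleton_iff] at hmem
      rcases hmem with h | h | h | h | h | h <;>
        rw [Sym2.eq_iff] at h <;>
        rcases h with ⟨h1, h2⟩ | ⟨h1, h2⟩ <;>
        first
          | exact hua.ne h1 | exact hub.ne h1 | exact huv.ne h1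
          | exact hux h1 | exact huy h1 | exact hup h1 | exact huq h1
          | exact hav h1.symm | exact hbv h1.symm | exact hcu h1.symm | exact hdu h1.symm
          | exact hua.ne h2 | exact hub.ne h2 | exact huv.ne h2
          | exact hux h2 | exact huy h2 | exact hup h2 | exact huq h2
          | exact hav h2.symm | exact hbv h2.symm | exact hcu h2.symm | exact hdu h2.symm
    have hTux : T'.graph.Adj u x := by
      rw [hEq, SimpleGraph.fromEdgeSet_adj]
      exact ⟨Or.inr (by simp), hux⟩
    have hTvx : T'.graph.Adj v x := by
      rw [hEq, SimpleGraph.fromEdgeSet_adj]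
      rw [Sym2.eq_iff] at hdeg
      rcases hdeg with ⟨h1, h2⟩ | ⟨h1, h2⟩
      · exact ⟨Or.inr (by simp [← h1]), hvx⟩
      · exact ⟨Or.inr (by simp [← h1]), hvx⟩
    exact no_triangle T'.graph T'.isTree hTuv hTvx hTux
  -- main case
  have hnu : ∀ w z : V, T.graph.Adj w z → s(w,z) ∉ R → s(w,z) ∉ K → w ≠ u ∧ w ≠ v := by
    intro w z hadj hR hK
    constructor
    · intro h
      rw [h] at hadj hR hK
      have hc' : z ∈ T.graph.neighborSet u := hadj
      rw [hnbu] at hc'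
      rcases hc' with rfl | rfl | rfl
      · exact hK (by simp [hKdef])
      · exact hR (by simp [hRdef])
      · exact hR (by simp [hRdef])
    · intro h
      rw [h] at hadj hR hK
      have hc' : z ∈ T.graph.neighborSet v := hadj
      rw [hnbv] at hc'
      rcases hc' with rfl | rfl | rfl
      · exact hK (by rw [Sym2.eq_swap]; simp [hKdef])
      · exact hR (by simp [hRdef])
      · exact hR (by simp [hRdef])
  have memA : ∀ w z : V, s(w,z) ∈ Bnew → s(w,z) ∉ K → s(w,z) ∈ Bold \ R := by
    intro w z hB hK
    obtain ⟨hE', hbad⟩ := hB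
    rw [hEq, SimpleGraph.edgeSet_fromEdgeSet] at hE'
    have hE2 := hE'.1
    have hAR : s(w,z) ∈ T.graph.edgeSet \ R := by
      rcases hE2 with h | h
      · exact h
      · exfalso; apply hK
        rcases h with h | h | h | h | h | h <;> simp [hKdef, h]
    have hadj : T.graph.Adj w z := hAR.1
    have hswap : s(z,w) = s(w,z) := Sym2.eq_swap
    obtain ⟨hwu, hwv⟩ := hnu w z hadj hAR.2 hK
    obtain ⟨hzu, hzv⟩ := hnu z w hadj.symm (hswap ▸ hAR.2) (hswap ▸ hK)
    have hb2 : f w ≠ f z := by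
      have := (bad_pair f' w z).mp hbad
      rwa [hfne w hwu hwv, hfne z hzu hzv] at this
    exact ⟨⟨hadj, (bad_pair f w z).mpr hb2⟩, hAR.2⟩
  have hA : Bnew ⊆ (Bold \ R) ∪ (Bnew ∩ K) := by
    intro e
    induction e using Sym2.ind with
    | _ w z =>
      intro he
      by_cases hK : s(w,z) ∈ K
      · exact Or.inr ⟨he, hK⟩
      · exact Or.inl (memA w z he hK)
  set KB := Bnew ∩ K with hKB
  set Y1 := KB ∩ {s(a,b)} with hY1
  set Y2 := KB ∩ {s(c,d)} with hY2
  set Y3 := KB ∩ {s(u,y)} with hY3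
  set Y4 := KB ∩ {s(v,q)} with hY4
  have hsub2 : KB ⊆ insert s(u,v) (Y1 ∪ Y2 ∪ Y3 ∪ Y4) := by
    rintro e ⟨heB, heK⟩
    simp only [hKdef, Set.mem_insert_iff, Set.mem_singleton_iff] at heK
    rcases heK with rfl | rfl | rfl | rfl | rfl | rfl | rfl
    · exact Set.mem_insert _ _
    · exact Set.mem_insert_of_mem _ (Or.inl (Or.inl (Or.inl ⟨⟨heB, by simp [hKdef]⟩, rfl⟩)))
    · exact Set.mem_insert_of_mem _ (Or.inl (Or.inl (Or.inr ⟨⟨heB, by simp [hKdef]⟩, rfl⟩)))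
    · exfalso
      have := (bad_pair f' u x).mp heB.2
      rw [hfu, hfne x (Ne.symm hux) (Ne.symm hvx)] at this
      exact this rfl
    · exact Set.mem_insert_of_mem _ (Or.inl (Or.inr ⟨⟨heB, by simp [hKdef]⟩, rfl⟩))
    · exfalso
      have := (bad_pair f' v p).mp heB.2
      rw [hfv, hfne p (Ne.symm hup) (Ne.symm hvp)] at this
      exact this rfl
    · exact Set.mem_insert_of_mem _ (Or.inr ⟨⟨heB, by simp [hKdef]⟩, rfl⟩)
  set X1 := Bold ∩ R ∩ {s(u,a), s(u,b)} with hX1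
  set X2 := Bold ∩ R ∩ {s(v,c), s(v,d)} with hX2
  set X3 := Bold ∩ R ∩ {s(x,y)} with hX3
  set X4 := Bold ∩ R ∩ {s(p,q)} with hX4
  have p1 : Y1.ncard ≤ X1.ncard := by
    apply inter_singleton_le
    intro hmem
    have hba : f a ≠ f b := by
      have := (bad_pair f' a b).mp hmem.1.2
      rwa [hfne a hua.ne' hav, hfne b hub.ne' hbv] at this
    by_cases hfa : f u = f a
    · exact ⟨s(u,b), ⟨⟨hub, (bad_pair f u b).mpr (hfa ▸ hba)⟩, by simp [hRdef]⟩, by simp⟩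
    · exact ⟨s(u,a), ⟨⟨hua, (bad_pair f u a).mpr hfa⟩, by simp [hRdef]⟩, by simp⟩
  have p2 : Y2.ncard ≤ X2.ncard := by
    apply inter_singleton_le
    intro hmem
    have hba : f c ≠ f d := by
      have := (bad_pair f' c d).mp hmem.1.2
      rwa [hfne c hcu hvc.ne', hfne d hdu hvd.ne'] at this
    by_cases hfc : f v = f c
    · exact ⟨s(v,d), ⟨⟨hvd, (bad_pair f v d).mpr (hfc ▸ hba)⟩, by simp [hRdef]⟩, by simp⟩
    · exact ⟨s(v,c), ⟨⟨hvc, (bad_pair f v c).mpr hfc⟩, by simp [hRdef]⟩, by simp⟩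
  have p3 : Y3.ncard ≤ X3.ncard := by
    apply inter_singleton_le
    intro hmem
    have hh : f x ≠ f y := by
      have := (bad_pair f' u y).mp hmem.1.2
      rwa [hfu, hfne y (Ne.symm huy) (Ne.symm hvy)] at this
    exact ⟨s(x,y), ⟨⟨hxy, (bad_pair f x y).mpr hh⟩, by simp [hRdef]⟩, rfl⟩
  have p4 : Y4.ncard ≤ X4.ncard := by
    apply inter_singleton_le
    intro hmem
    have hh : f p ≠ f q := by
      have := (bad_pair f' v q).mp hmem.1.2
      rwa [hfv, hfne q (Ne.symm huq) (Ne.symm hvq)] at this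
    exact ⟨s(p,q), ⟨⟨hpq, (bad_pair f p q).mpr hh⟩, by simp [hRdef]⟩, rfl⟩
  have d12 : Disjoint X1 X2 := by
    rw [Set.disjoint_left]
    rintro e ⟨-, he1⟩ ⟨-, he2⟩
    simp only [Set.mem_insert_iff, Set.mem_singleton_iff] at he1 he2
    rcases he1 with rfl | rfl <;>
      simp only [Sym2.eq_iff] at he2 <;>
      rcases he2 with (⟨h1,h2⟩|⟨h1,h2⟩)|(⟨h1,h2⟩|⟨h1,h2⟩) <;>
      first
        | exact huv.ne h1 | exact huv.ne h2
        | exact hcu h1.symm | exact hcu h2.symm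
        | exact hdu h1.symm | exact hdu h2.symm
        | exact hav h1.symm | exact hav h2.symm
        | exact hbv h1.symm | exact hbv h2.symm
  have d13 : Disjoint X1 X3 := by
    rw [Set.disjoint_left]
    rintro e ⟨-, he1⟩ ⟨-, he2⟩
    rw [Set.mem_singleton_iff] at he2
    subst he2
    simp only [Set.mem_insert_iff, Set.mem_singleton_iff, Sym2.eq_iff] at he1
    rcases he1 with (⟨h,-⟩|⟨-,h⟩)|(⟨h,-⟩|⟨-,h⟩)
    · exact hux h.symm
    · exact huy h.symm
    · exact hux h.symm
    · exact huy h.symm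
  have d14 : Disjoint X1 X4 := by
    rw [Set.disjoint_left]
    rintro e ⟨-, he1⟩ ⟨-, he2⟩
    rw [Set.mem_singleton_iff] at he2
    subst he2
    simp only [Set.mem_insert_iff, Set.mem_singleton_iff, Sym2.eq_iff] at he1
    rcases he1 with (⟨h,-⟩|⟨-,h⟩)|(⟨h,-⟩|⟨-,h⟩)
    · exact hup h.symm
    · exact huq h.symm
    · exact hup h.symm
    · exact huq h.symm
  have d23 : Disjoint X2 X3 := by
    rw [Set.disjoint_left]
    rintro e ⟨-, he1⟩ ⟨-, he2⟩
    rw [Set.mem_singleton_iff] at he2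
    subst he2
    simp only [Set.mem_insert_iff, Set.mem_singleton_iff, Sym2.eq_iff] at he1
    rcases he1 with (⟨h,-⟩|⟨-,h⟩)|(⟨h,-⟩|⟨-,h⟩)
    · exact hvx h.symm
    · exact hvy h.symm
    · exact hvx h.symm
    · exact hvy h.symm
  have d24 : Disjoint X2 X4 := by
    rw [Set.disjoint_left]
    rintro e ⟨-, he1⟩ ⟨-, he2⟩
    rw [Set.mem_singleton_iff] at he2
    subst he2
    simp only [Set.mem_insert_iff, Set.mem_singleton_iff, Sym2.eq_iff] at he1
    rcases he1 with (⟨h,-⟩|⟨-,h⟩)|(⟨h,-⟩|⟨-,h⟩)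
    · exact hvp h.symm
    · exact hvq h.symm
    · exact hvp h.symm
    · exact hvq h.symm
  have d34 : Disjoint X3 X4 := by
    rw [Set.disjoint_left]
    rintro e ⟨-, he1⟩ ⟨-, he2⟩
    rw [Set.mem_singleton_iff] at he1
    rw [Set.mem_singleton_iff] at he2
    exact hdeg (he1 ▸ he2)
  have hfour := four_le X1 X2 X3 X4 (Bold ∩ R)
    Set.inter_subset_left Set.inter_subset_left Set.inter_subset_left Set.inter_subset_left
    d12 d13 d14 d23 d24 d34
  have hB : KB.ncard ≤ (Bold ∩ R).ncard + 1 := by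
    have c1 : KB.ncard ≤ (insert s(u,v) (Y1 ∪ Y2 ∪ Y3 ∪ Y4)).ncard :=
      Set.ncard_le_ncard hsub2 (Set.toFinite _)
    have c2 := Set.ncard_insert_le s(u,v) (Y1 ∪ Y2 ∪ Y3 ∪ Y4)
    have c3 := Set.ncard_union_le (Y1 ∪ Y2 ∪ Y3) Y4
    have c4 := Set.ncard_union_le (Y1 ∪ Y2) Y3
    have c5 := Set.ncard_union_le Y1 Y2
    omega
  exact main_count Bnew Bold R K hA hB

end Core2


section Final
open SimpleGraph Set

variable {V : Type*} [Fintype V] {L : Set V} {S : Type*}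

lemma parsLen_le_of_ext (T : PhyloTree V L) (X : L → S) (f : V → S)
    (hf : ∀ v : L, f ↑v = X v) : parsLen T X ≤ changedEdges T.graph f :=
  Nat.sInf_le ⟨f, hf, rfl⟩

end Final

/-- A single TBR rearrangement increases the parsimony length of any character
by at most one. -/theorem tbr_move_parsimony_le {V : Type*} [Fintype V] {L : Set V} {S : Type*}
    (T T' : PhyloTree V L) (X : L → S) (h : TBRMove T T') :
    parsLen T' X ≤ parsLen T X + 1 := by
  classical
  by_cases hex : ∃ f : V → S, ∀ v : L, f ↑v = X v
  · -- the set of achievable scores for T is nonempty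
    obtain ⟨f0, hf0⟩ := hex
    have hne : {n | ∃ f : V → S, (∀ v : L, f ↑v = X v) ∧ changedEdges T.graph f = n}.Nonempty :=
      ⟨changedEdges T.graph f0, f0, hf0, rfl⟩
    have hmem := Nat.sInf_mem hne
    obtain ⟨f, hfext, hfval⟩ := hmem
    have hfval' : changedEdges T.graph f = parsLen T X := hfval
    rcases h with ⟨u, v, a, b, x, y, huL, huv, hua, hub, hab, hav, hbv, hxy, hux, huy, hEq⟩ |
      ⟨u, v, a, b, c, d, x, y, p, q, huL, hvL, huv, hua, hub, hab, hav, hbv, hvc, hvd, hcd,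
        hcu, hdu, hxy, hux, huy, hvx, hvy, hpq, hup, huq, hvp, hvq, hEq⟩
    · obtain ⟨f', hfne', hle⟩ :=
        spr_core T T' f u v a b x y huL huv hua hub hab hav hbv hxy hux huy hEq
      have hext' : ∀ w : L, f' ↑w = X w := by
        intro w
        rw [hfne' ↑w (fun hh => huL (hh ▸ w.2)), hfext w]
      have h1 := parsLen_le_of_ext T' X f' hext'
      exact h1.trans (hle.trans (Nat.add_le_add_right hfval'.le 1))
    · obtain ⟨f', hfne', hle⟩ :=
        tbr_core T T' f u v a b c d x y p q huL hvL huv hua hub hab hav hbv hvc hvd hcd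
          hcu hdu hxy hux huy hvx hvy hpq hup huq hvp hvq hEq
      have hext' : ∀ w : L, f' ↑w = X w := by
        intro w
        rw [hfne' ↑w (fun hh => huL (hh ▸ w.2)) (fun hh => hvL (hh ▸ w.2)), hfext w]
      have h1 := parsLen_le_of_ext T' X f' hext'
      exact h1.trans (hle.trans (Nat.add_le_add_right hfval'.le 1))
  · have hempty : {n | ∃ f : V → S, (∀ v : L, f ↑v = X v) ∧ changedEdges T'.graph f = n} = ∅ := by
      rw [Set.eq_empty_iff_forall_notMem]
      rintro n ⟨f, hf, -⟩
      exact hex ⟨f, hf⟩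
    have : parsLen T' X = 0 := by
      unfold parsLen
      rw [hempty]
      exact Nat.sInf_empty
    rw [this]
    exact Nat.zero_le _
end

section
/- Performing a single SPR (subtree prune and regraft) rearrangement on a fully resolved phylogenetic tree increases the parsimony length of any unordered reversible character by at most one. -/
/-- A single SPR rearrangement increases the parsimony length of any character
by at most one. -/
theorem spr_move_parsimony_le {V : Type*} [Fintype V] {L : Set V} {S : Type*}
    (T T' : PhyloTree V L) (X : L → S) (h : SPRMove T T') :
    parsLen T' X ≤ parsLen T X + 1 := by
  obtain ⟨u, v, a, b, x, y, huL, huv, hua, hub, hab, hav, hbv, hxy, hux, huy, hT'⟩ := h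
  classical
  by_cases hS : Nonempty S
  case neg =>
    have hempty : {n | ∃ f : V → S, (∀ w : L, f ↑w = X w) ∧ changedEdges T'.graph f = n}
        = (∅ : Set ℕ) := by
      ext n
      simp only [Set.mem_setOf_eq, Set.mem_empty_iff_false, iff_false]
      rintro ⟨f, -, -⟩
      exact hS ⟨f u⟩
    have : parsLen T' X = 0 := by
      unfold parsLen
      rw [hempty, Nat.sInf_empty]
    omega
  obtain ⟨s0⟩ := hS
  -- the defining set for parsLen T X is nonempty
  have hPne : {n | ∃ f : V → S, (∀ w : L, f ↑w = X w) ∧ changedEdges T.graph f = n}.Nonempty := by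
    refine ⟨_, fun w => if h : w ∈ L then X ⟨w, h⟩ else s0, fun w => ?_, rfl⟩
    simp [w.2]
  have hmem : parsLen T X ∈
      {n | ∃ f : V → S, (∀ w : L, f ↑w = X w) ∧ changedEdges T.graph f = n} :=
    Nat.sInf_mem hPne
  obtain ⟨f, hf, hcf⟩ := hmem
  -- modified labeling
  set f' : V → S := Function.update f u (f x) with hf'def
  have hf'u : f' u = f x := Function.update_self u (f x) f
  have hf'ne : ∀ w, w ≠ u → f' w = f w := fun w hw => Function.update_of_ne hw (f x) f
  have hext' : ∀ w : L, f' ↑w = X w := by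
    intro w
    rw [hf'ne _ (by rintro rfl; exact huL w.2), hf w]
  -- the neighbours of u in T are exactly v, a, b
  have hNu : T.graph.neighborSet u = {v, a, b} := by
    have hsub : ({v, a, b} : Set V) ⊆ T.graph.neighborSet u := by
      rintro w (rfl | rfl | rfl)
      · exact huv
      · exact hua
      · exact hub
    have hcard3 : ({v, a, b} : Set V).ncard = 3 := by
      rw [Set.ncard_insert_of_notMem (by simp [hav.symm, hbv.symm]),
        Set.ncard_pair hab]
    exact (Set.eq_of_subset_of_ncard_le hsub
      (by rw [T.internal_deg u huL, hcard3]) (Set.toFinite _)).symm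
  have hedge_u : ∀ e ∈ T.graph.edgeSet, u ∈ e →
      e = s(u, v) ∨ e = s(u, a) ∨ e = s(u, b) := by
    intro e he hue
    induction e with
    | h p q =>
      have hadj : T.graph.Adj p q := he
      rcases Sym2.mem_iff.mp hue with rfl | rfl
      · have : q ∈ T.graph.neighborSet u := hadj
        rw [hNu] at this
        rcases this with rfl | rfl | rfl
        · exact Or.inl rfl
        · exact Or.inr (Or.inl rfl)
        · exact Or.inr (Or.inr rfl)
      · have : p ∈ T.graph.neighborSet u := hadj.symm
        rw [hNu] at this
        rcases this with rfl | rfl | rfl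
        · exact Or.inl (Sym2.eq_swap)
        · exact Or.inr (Or.inl (Sym2.eq_swap))
        · exact Or.inr (Or.inr (Sym2.eq_swap))
  have hE' : T'.graph.edgeSet =
      (T.graph.edgeSet \ {s(u, a), s(u, b), s(x, y)}) ∪ {s(a, b), s(u, x), s(u, y)} := by
    rw [hT', SimpleGraph.edgeSet_fromEdgeSet]
    ext e
    constructor
    · exact fun he => he.1
    · intro he
      refine ⟨he, ?_⟩
      rcases he with ⟨heE, -⟩ | hh
      · exact T.graph.not_isDiag_of_mem_edgeSet heE
      · simp only [Set.mem_insert_iff, Set.mem_singleton_iff] at hh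
        rcases hh with rfl | rfl | rfl
        · exact fun hd => hab (Sym2.mk_isDiag_iff.mp hd)
        · exact fun hd => hux (Sym2.mk_isDiag_iff.mp hd)
        · exact fun hd => huy (Sym2.mk_isDiag_iff.mp hd)
  have hmap : ∀ e : Sym2 V, u ∉ e → Sym2.map f' e = Sym2.map f e := by
    intro e
    induction e with
    | h p q =>
      intro hue
      rw [Sym2.mem_iff] at hue
      push_neg at hue
      rw [Sym2.map_pair_eq, Sym2.map_pair_eq, hf'ne p (Ne.symm hue.1),
        hf'ne q (Ne.symm hue.2)]
  -- the key sets
  set D : Set (Sym2 V) := {e | e ∈ T.graph.edgeSet ∧ ¬ (Sym2.map f e).IsDiag} with hD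
  set D' : Set (Sym2 V) := {e | e ∈ T'.graph.edgeSet ∧ ¬ (Sym2.map f' e).IsDiag} with hD'
  set K : Set (Sym2 V) := {s(u, v), s(u, a), s(u, b), s(x, y)} with hK
  set A : Set (Sym2 V) := D' ∩ {s(u, v), s(a, b), s(u, y)} with hA
  have hval : ∀ p q : V, p ≠ u → q ≠ u → (¬ (Sym2.map f' s(p, q)).IsDiag ↔ f p ≠ f q) := by
    intro p q hp hq
    rw [Sym2.map_pair_eq, Sym2.mk_isDiag_iff, hf'ne p hp, hf'ne q hq]
  -- Claim 1 : D' ⊆ (D \ K) ∪ A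
  have hsub1 : D' ⊆ (D \ K) ∪ A := by
    intro e he
    have heE' := he.1
    rw [hE'] at heE'
    rcases heE' with ⟨heE, heR⟩ | heN
    · by_cases hcase : e = s(u, v)
      · exact Or.inr ⟨he, by rw [hcase]; exact Or.inl rfl⟩
      · have hu_notin : u ∉ e := by
          intro hue
          rcases hedge_u e heE hue with rfl | rfl | rfl
          · exact hcase rfl
          · exact heR (Or.inl rfl)
          · exact heR (Or.inr (Or.inl rfl))
        refine Or.inl ⟨⟨heE, ?_⟩, ?_⟩
        · rw [← hmap e hu_notin]; exact he.2
        · rintro (h1 | h1 | h1 | h1)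
          · exact hcase h1
          · exact heR (Or.inl h1)
          · exact heR (Or.inr (Or.inl h1))
          · exact heR (Or.inr (Or.inr h1))
    · rcases heN with rfl | rfl | rfl
      · exact Or.inr ⟨he, Or.inr (Or.inl rfl)⟩
      · exfalso
        apply he.2
        rw [Sym2.map_pair_eq, Sym2.mk_isDiag_iff, hf'u, hf'ne x (Ne.symm hux)]
      · exact Or.inr ⟨he, Or.inr (Or.inr rfl)⟩
  -- Claim 2 : A.ncard ≤ (D ∩ K).ncard + 1
  have hsxy_ne_ua : s(x, y) ≠ s(u, a) := by
    intro hh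
    rw [Sym2.eq_iff] at hh
    rcases hh with ⟨rfl, -⟩ | ⟨-, rfl⟩
    · exact hux rfl
    · exact huy rfl
  have hsxy_ne_ub : s(x, y) ≠ s(u, b) := by
    intro hh
    rw [Sym2.eq_iff] at hh
    rcases hh with ⟨rfl, -⟩ | ⟨-, rfl⟩
    · exact hux rfl
    · exact huy rfl
  have hsab_ne_suy : s(a, b) ≠ s(u, y) := by
    intro hh
    rw [Sym2.eq_iff] at hh
    rcases hh with ⟨rfl, -⟩ | ⟨-, rfl⟩
    · exact hua.ne' rfl
    · exact hub.ne' rfl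
  have hclaim2 : A.ncard ≤ (D ∩ K).ncard + 1 := by
    have h1 : A ⊆ insert s(u, v) (A \ {s(u, v)}) := by
      intro e he
      by_cases h : e = s(u, v)
      · exact Or.inl h
      · exact Or.inr ⟨he, h⟩
    have h2 : A.ncard ≤ (A \ {s(u, v)}).ncard + 1 :=
      le_trans (Set.ncard_le_ncard h1 (Set.toFinite _)) (Set.ncard_insert_le _ _)
    have hB : (A \ {s(u, v)}).ncard ≤ (D ∩ K).ncard := by
      apply Set.ncard_le_ncard_of_injOn
        (fun e => if e = s(a, b) then (if f u = f a then s(u, b) else s(u, a)) else s(x, y))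
      · rintro e ⟨⟨heD', hmem3⟩, hne⟩
        rcases hmem3 with h1 | h1 | h1
        · exact absurd h1 hne
        · subst h1
          have hfab : f a ≠ f b := by
            have := heD'.2
            rwa [hval a b hua.ne' hub.ne'] at this
          by_cases hcmp : f u = f a
          · simp only [if_pos rfl, if_true, if_pos hcmp]
            refine ⟨⟨hub, ?_⟩, Or.inr (Or.inr (Or.inl rfl))⟩
            rw [Sym2.map_pair_eq, Sym2.mk_isDiag_iff]
            rw [hcmp]; exact hfab
          · simp only [if_pos rfl, if_true, if_neg hcmp]
            refine ⟨⟨hua, ?_⟩, Or.inr (Or.inl rfl)⟩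
            rw [Sym2.map_pair_eq, Sym2.mk_isDiag_iff]
            exact hcmp
        · subst h1
          simp only [if_neg hsab_ne_suy.symm]
          have hfxy : f x ≠ f y := by
            have := heD'.2
            rwa [Sym2.map_pair_eq, Sym2.mk_isDiag_iff, hf'u,
              hf'ne y (Ne.symm huy)] at this
          refine ⟨⟨hxy, ?_⟩, Or.inr (Or.inr (Or.inr rfl))⟩
          rw [Sym2.map_pair_eq, Sym2.mk_isDiag_iff]
          exact hfxy
      · rintro e1 ⟨⟨-, hm1⟩, hne1⟩ e2 ⟨⟨-, hm2⟩, hne2⟩ heq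
        have he1 : e1 = s(a, b) ∨ e1 = s(u, y) := by
          rcases hm1 with h | h | h
          · exact absurd h hne1
          · exact Or.inl h
          · exact Or.inr h
        have he2 : e2 = s(a, b) ∨ e2 = s(u, y) := by
          rcases hm2 with h | h | h
          · exact absurd h hne2
          · exact Or.inl h
          · exact Or.inr h
        rcases he1 with rfl | rfl <;> rcases he2 with rfl | rfl
        · rfl
        · exfalso
          simp only [if_pos rfl, if_true, if_neg hsab_ne_suy.symm] at heq
          by_cases hcmp : f u = f a
          · rw [if_pos hcmp] at heq; exact hsxy_ne_ub heq.symm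
          · rw [if_neg hcmp] at heq; exact hsxy_ne_ua heq.symm
        · exfalso
          simp only [if_pos rfl, if_true, if_neg hsab_ne_suy.symm] at heq
          by_cases hcmp : f u = f a
          · rw [if_pos hcmp] at heq; exact hsxy_ne_ub heq
          · rw [if_neg hcmp] at heq; exact hsxy_ne_ua heq
        · rfl
    omega
  -- conclude
  have hpartition : (D ∩ K).ncard + (D \ K).ncard = D.ncard :=
    Set.ncard_inter_add_ncard_diff_eq_ncard D K (Set.toFinite _)
  have hmain : changedEdges T'.graph f' ≤ changedEdges T.graph f + 1 := by
    show D'.ncard ≤ D.ncard + 1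
    calc D'.ncard ≤ ((D \ K) ∪ A).ncard := Set.ncard_le_ncard hsub1 (Set.toFinite _)
      _ ≤ (D \ K).ncard + A.ncard := Set.ncard_union_le _ _
      _ ≤ (D \ K).ncard + ((D ∩ K).ncard + 1) := by omega
      _ = D.ncard + 1 := by omega
  have hle : parsLen T' X ≤ changedEdges T'.graph f' :=
    Nat.sInf_le ⟨f', hext', rfl⟩
  omega
end
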